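/- Let k be a field with char k ≠ 2, K = k(√a) a quadratic extension with Gal(K/k) = ⟨σ⟩, and let f(x) ∈ k[x] be a polynomial of degree 1. Extend σ to K(x,y) by σ(√a) = −√a, σ(x) = x, σ(y) = f(x)/y. Then K(x,y)^⟨σ⟩ is always purely transcendental over k. -/

import Mathlib

open MvPolynomial in
lemma my_bind_indep {K F : Type} [Field K] [Field F] [Algebra K F]
    {n : ℕ} {w : Fin n → F} (hw : AlgebraicIndependent K w)
    (f finv : Fin n → MvPolynomial (Fin n) K)
    (h : ∀ i, MvPolynomial.bind₁ finv (f i) = MvPolynomial.X i) :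
    AlgebraicIndependent K (fun i => MvPolynomial.aeval w (f i)) := by
  apply hw.aeval_of_algebraicIndependent
  rw [algebraicIndependent_iff_injective_aeval]
  have key : ∀ p : MvPolynomial (Fin n) K,
      MvPolynomial.bind₁ finv (MvPolynomial.aeval f p) = p := by
    intro p
    have : (MvPolynomial.aeval f p : MvPolynomial (Fin n) K) = MvPolynomial.bind₁ f p := rfl
    rw [this, MvPolynomial.bind₁_bind₁]
    simp only [h]
    rw [MvPolynomial.bind₁_X_left]
    rfl
  exact Function.LeftInverse.injective key

lemma my_isAlgebraic_algebraMap_mul {R F : Type*} [CommRing R] [Field F] [Algebra R F]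
    {w : F} (h : IsAlgebraic R w) (r : R) : IsAlgebraic R (algebraMap R F r * w) := by
  obtain ⟨q, hq, hqw⟩ := h
  set n := q.natDegree with hn
  refine ⟨∑ i ∈ Finset.range (n+1), Polynomial.C (q.coeff i * r ^ (n - i)) * Polynomial.X ^ i,
    ?_, ?_⟩
  · intro habs
    have hcoeff := congrArg (fun p => Polynomial.coeff p n) habs
    simp only [Polynomial.finset_sum_coeff, Polynomial.coeff_C_mul, Polynomial.coeff_X_pow,
      Polynomial.coeff_zero] at hcoeff
    rw [Finset.sum_eq_single n (fun b _ hb => by rw [if_neg (Ne.symm hb), mul_zero])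
      (fun hmem => by simp at hmem)] at hcoeff
    simp at hcoeff
    exact Polynomial.leadingCoeff_ne_zero.2 hq hcoeff
  · have expand : (Polynomial.aeval w) q = ∑ i ∈ Finset.range (n+1),
        algebraMap R F (q.coeff i) * w ^ i := by
      rw [Polynomial.aeval_eq_sum_range]
      simp [Algebra.smul_def]
      rfl
    rw [map_sum]
    have : ∀ i ∈ Finset.range (n+1),
        (Polynomial.aeval (algebraMap R F r * w)) (Polynomial.C (q.coeff i * r ^ (n - i)) * Polynomial.X ^ i)
          = algebraMap R F r ^ n * (algebraMap R F (q.coeff i) * w ^ i) := by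
      intro i hi
      simp only [map_mul, Polynomial.aeval_C, Polynomial.aeval_X_pow, map_pow]
      rw [Finset.mem_range] at hi
      have : algebraMap R F r ^ (n - i) * (algebraMap R F r * w) ^ i
          = algebraMap R F r ^ n * w ^ i := by
        rw [mul_pow, ← mul_assoc, ← pow_add]
        congr 2
        omega
      rw [Polynomial.aeval_X]
      calc (algebraMap R F) (q.coeff i) * (algebraMap R F) r ^ (n - i) * ((algebraMap R F) r * w) ^ i
          = (algebraMap R F) (q.coeff i) * ((algebraMap R F) r ^ (n - i) * ((algebraMap R F) r * w) ^ i) := by ring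
        _ = (algebraMap R F) r ^ n * ((algebraMap R F) (q.coeff i) * w ^ i) := by rw [this]; ring
    rw [Finset.sum_congr rfl this, ← Finset.mul_sum, ← expand, hqw, mul_zero]

lemma my_mem_fixed {k F : Type} [Field k] [Field F] [Algebra k F]
    (σ : F ≃ₐ[k] F) {w : F} (hw : σ w = w) :
    w ∈ IntermediateField.fixedField (Subgroup.zpowers σ) := by
  have key : ∀ m : ℕ, (σ ^ m) w = w := by
    intro m
    induction m with
    | zero => simp
    | succ i ih => rw [pow_succ, AlgEquiv.mul_apply, hw, ih]
  rintro ⟨τ, n, rfl⟩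
  show (σ ^ n) w = w
  cases n with
  | ofNat m => rw [Int.ofNat_eq_coe, zpow_natCast]; exact key m
  | negSucc m =>
      rw [zpow_negSucc]
      have h1 := key (m + 1)
      have h2 : ((σ ^ (m+1))⁻¹) ((σ ^ (m + 1)) w) = ((σ ^ (m+1))⁻¹) w := by rw [h1]
      rw [← AlgEquiv.mul_apply, inv_mul_cancel, AlgEquiv.one_apply] at h2
      exact h2.symm


/-- `L` is purely transcendental over `k` of transcendence degree `m`:
it is generated over `k` by `m` algebraically independent elements. -/
def IsRationalOfDeg (k : Type) {F : Type} [Field k] [Field F] [Algebra k F]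
    (L : IntermediateField k F) (m : ℕ) : Prop :=
  ∃ u : Fin m → F, (∀ i, u i ∈ L) ∧ AlgebraicIndependent k u ∧
    L = IntermediateField.adjoin k (Set.range u)

set_option maxHeartbeats 1000000 in
set_option synthInstance.maxHeartbeats 400000 in
/-- For `K = k(√a)` with `Gal(K/k) = ⟨σ⟩` extended to `K(x,y)` by `σ(x) = x`,
`σ(y) = f(x)/y` with `f(x) = cx + d` of degree 1, the fixed field `K(x,y)^⟨σ⟩`
is always purely transcendental over `k`. -/
theorem stmt7 (k K F : Type) [Field k] [Field K] [Field F]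
    [Algebra k K] [Algebra K F] [Algebra k F] [IsScalarTower k K F]
    (h2 : (2 : k) ≠ 0) (a : k) (ha : a ≠ 0)
    (hnsq : ¬∃ r : k, r ^ 2 = a)
    (sqa : K) (hsqa : sqa ^ 2 = algebraMap k K a)
    (hKgen : IntermediateField.adjoin k {sqa} = ⊤)
    (c d : k) (hc : c ≠ 0)
    (x y : F) (hind : AlgebraicIndependent K ![x, y])
    (hadj : IntermediateField.adjoin K {x, y} = ⊤)
    (σ : F ≃ₐ[k] F)
    (hσK : σ (algebraMap K F sqa) = - algebraMap K F sqa)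
    (hx : σ x = x)
    (hy : σ y = (algebraMap k F c * x + algebraMap k F d) / y) :
    IsRationalOfDeg k (IntermediateField.fixedField (Subgroup.zpowers σ)) 2 := by
  classical
  have injk : Function.Injective (algebraMap k F) := (algebraMap k F).injective
  have injkK : Function.Injective (algebraMap k K) := (algebraMap k K).injective
  have injKF : Function.Injective (algebraMap K F) := (algebraMap K F).injective
  set s : F := algebraMap K F sqa with hs_def
  set cF : F := algebraMap k F c with hcF_def
  set dF : F := algebraMap k F d with hdF_def
  set g : F := cF * x + dF with hg_def
  set u : F := y + g / y with hu_def
  set v : F := s * (y - g / y) with hv_def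
  -- basic nonvanishing facts
  have h2K : (2 : K) ≠ 0 := by
    intro hh
    exact h2 (injkK (by rw [map_ofNat, map_zero, hh]))
  have h2F : (2 : F) ≠ 0 := by
    intro hh
    exact h2 (injk (by rw [map_ofNat, map_zero, hh]))
  have hsqa0 : sqa ≠ 0 := by
    intro hh
    apply ha
    apply injkK
    rw [map_zero, ← hsqa, hh]
    ring
  have hs0 : s ≠ 0 := by
    rw [hs_def]
    intro hh
    exact hsqa0 (injKF (by rw [map_zero, hh]))
  have hcK : algebraMap k K c ≠ 0 := fun hh => hc (injkK (by rw [map_zero, hh]))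
  have hcF0 : cF ≠ 0 := fun hh => hc (injk (by rw [map_zero, ← hcF_def, hh]))
  have haF : algebraMap k F a ≠ 0 := fun hh => ha (injk (by rw [map_zero, hh]))
  have hs2 : s ^ 2 = algebraMap k F a := by
    rw [hs_def, ← map_pow, hsqa, ← IsScalarTower.algebraMap_apply]
  have htx : Transcendental K x := by simpa using hind.transcendental 0
  have hty : Transcendental K y := by simpa using hind.transcendental 1
  have hy0 : y ≠ 0 := by
    intro hh
    exact hty (hh ▸ isAlgebraic_zero)
  -- Step: ![g, y] is algebraically independent over K
  have S2 : AlgebraicIndependent K ![g, y] := by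
    have hcc : (MvPolynomial.C (algebraMap k K c) : MvPolynomial (Fin 2) K) *
        MvPolynomial.C (algebraMap k K c)⁻¹ = 1 := by
      rw [← MvPolynomial.C_mul, mul_inv_cancel₀ hcK, MvPolynomial.C_1]
    have hb : ∀ i, MvPolynomial.bind₁
        ![MvPolynomial.C (algebraMap k K c)⁻¹ * (MvPolynomial.X 0 - MvPolynomial.C (algebraMap k K d)),
          MvPolynomial.X 1]
        ((![MvPolynomial.C (algebraMap k K c) * MvPolynomial.X 0 + MvPolynomial.C (algebraMap k K d),
          MvPolynomial.X 1] : Fin 2 → MvPolynomial (Fin 2) K) i) = MvPolynomial.X i := by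
      intro i
      fin_cases i
      · show MvPolynomial.bind₁ _ (MvPolynomial.C (algebraMap k K c) * MvPolynomial.X 0
            + MvPolynomial.C (algebraMap k K d)) = MvPolynomial.X 0
        simp only [map_add, map_mul, MvPolynomial.bind₁_C_right, MvPolynomial.bind₁_X_right,
          Matrix.cons_val_zero]
        linear_combination (MvPolynomial.X 0 - MvPolynomial.C (algebraMap k K d)) * hcc
      · show MvPolynomial.bind₁ _ (MvPolynomial.X 1 : MvPolynomial (Fin 2) K) = MvPolynomial.X 1
        simp [MvPolynomial.bind₁_X_right]
    have := my_bind_indep hind _ _ hb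
    have heq : (fun i => MvPolynomial.aeval ![x, y]
        ((![MvPolynomial.C (algebraMap k K c) * MvPolynomial.X 0 + MvPolynomial.C (algebraMap k K d),
          MvPolynomial.X 1] : Fin 2 → MvPolynomial (Fin 2) K) i)) = ![g, y] := by
      funext i
      fin_cases i
      · simp [hg_def, hcF_def, hdF_def, ← IsScalarTower.algebraMap_apply]
      · simp
    rwa [heq] at this
  have htg : Transcendental K g := by simpa using S2.transcendental 0
  have hg0 : g ≠ 0 := by
    intro hh
    exact htg (hh ▸ isAlgebraic_zero)
  have hy_ind : AlgebraicIndependent K ![y] :=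
    (algebraicIndependent_iff_transcendental (R := K)).2 hty
  have hcomp : (fun o : Option (Fin 1) => o.elim g ![y]) ∘ (finSuccEquiv 1) = ![g, y] := by
    funext i
    fin_cases i <;> rfl
  have S2opt : AlgebraicIndependent K (fun o : Option (Fin 1) => o.elim g ![y]) :=
    (algebraicIndependent_equiv' (finSuccEquiv 1) hcomp).1 S2
  have htg' : Transcendental (Algebra.adjoin K (Set.range ![y])) g :=
    (hy_ind.option_iff_transcendental g).1 S2opt
  have hyA : y ∈ Algebra.adjoin K (Set.range ![y]) := Algebra.subset_adjoin (by simp)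
  have htq : Transcendental (Algebra.adjoin K (Set.range ![y])) (g / y) := by
    intro habs
    apply htg'
    have h1 := my_isAlgebraic_algebraMap_mul habs ⟨y, hyA⟩
    have heq : algebraMap (Algebra.adjoin K (Set.range ![y])) F ⟨y, hyA⟩ * (g / y) = g := by
      show y * (g / y) = g
      field_simp
    rwa [heq] at h1
  have hcomp2 : (fun o : Option (Fin 1) => o.elim (g / y) ![y]) ∘ (finSuccEquiv 1)
      = ![g / y, y] := by
    funext i
    fin_cases i <;> rfl
  have S5 : AlgebraicIndependent K ![g / y, y] :=
    (algebraicIndependent_equiv' (finSuccEquiv 1) hcomp2).2 ((hy_ind.option_iff_transcendental (g / y)).2 htq)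
  -- Step: ![u, v] is algebraically independent over K
  have Suv : AlgebraicIndependent K ![u, v] := by
    have h2c : (MvPolynomial.C (2⁻¹ : K) : MvPolynomial (Fin 2) K) * 2 = 1 := by
      rw [show ((2 : MvPolynomial (Fin 2) K)) = MvPolynomial.C (2 : K) from
        (map_ofNat (MvPolynomial.C : K →+* MvPolynomial (Fin 2) K) 2).symm,
        ← MvPolynomial.C_mul, inv_mul_cancel₀ h2K, MvPolynomial.C_1]
    have hsc : (MvPolynomial.C sqa : MvPolynomial (Fin 2) K) * MvPolynomial.C sqa⁻¹ = 1 := by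
      rw [← MvPolynomial.C_mul, mul_inv_cancel₀ hsqa0, MvPolynomial.C_1]
    have hb : ∀ i, MvPolynomial.bind₁
        ![(MvPolynomial.X 0 - MvPolynomial.C sqa⁻¹ * MvPolynomial.X 1) * MvPolynomial.C (2⁻¹ : K),
          (MvPolynomial.X 0 + MvPolynomial.C sqa⁻¹ * MvPolynomial.X 1) * MvPolynomial.C (2⁻¹ : K)]
        ((![MvPolynomial.X 1 + MvPolynomial.X 0,
            MvPolynomial.C sqa * (MvPolynomial.X 1 - MvPolynomial.X 0)] :
            Fin 2 → MvPolynomial (Fin 2) K) i) = MvPolynomial.X i := by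
      intro i
      fin_cases i
      · show MvPolynomial.bind₁ _ (MvPolynomial.X 1 + MvPolynomial.X 0 : MvPolynomial (Fin 2) K)
            = MvPolynomial.X 0
        simp only [map_add, MvPolynomial.bind₁_X_right, Matrix.cons_val_zero, Matrix.cons_val_one,
          Matrix.head_cons]
        linear_combination (MvPolynomial.X 0 : MvPolynomial (Fin 2) K) * h2c
      · show MvPolynomial.bind₁ _ (MvPolynomial.C sqa * (MvPolynomial.X 1 - MvPolynomial.X 0))
            = MvPolynomial.X 1
        simp only [map_mul, map_sub, MvPolynomial.bind₁_C_right, MvPolynomial.bind₁_X_right,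
          Matrix.cons_val_zero, Matrix.cons_val_one, Matrix.head_cons]
        linear_combination (MvPolynomial.C sqa * MvPolynomial.C sqa⁻¹ * MvPolynomial.X 1 :
            MvPolynomial (Fin 2) K) * h2c + (MvPolynomial.X 1 : MvPolynomial (Fin 2) K) * hsc
    have := my_bind_indep S5 _ _ hb
    have heq : (fun i => MvPolynomial.aeval ![g / y, y]
        ((![MvPolynomial.X 1 + MvPolynomial.X 0,
            MvPolynomial.C sqa * (MvPolynomial.X 1 - MvPolynomial.X 0)] :
            Fin 2 → MvPolynomial (Fin 2) K) i)) = ![u, v] := by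
      funext i
      fin_cases i
      · simp [hu_def]
      · simp [hv_def, hs_def]
    rwa [heq] at this
  have huv : AlgebraicIndependent k ![u, v] := Suv.restrictScalars injkK
  -- the candidate field E = k(u, v)
  set E : IntermediateField k F := IntermediateField.adjoin k {u, v} with hE_def
  have huE : u ∈ E := IntermediateField.subset_adjoin k _ (by left; rfl)
  have hvE : v ∈ E := IntermediateField.subset_adjoin k _ (by right; rfl)
  -- x ∈ E
  have key4 : u ^ 2 - (algebraMap k F a)⁻¹ * v ^ 2 = 4 * g := by
    have h1 : v ^ 2 = algebraMap k F a * (y - g / y) ^ 2 := by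
      rw [hv_def, mul_pow, hs2]
    rw [hu_def, h1]
    field_simp
    ring
  have hxid : x = algebraMap k F ((4 * c)⁻¹) * (u ^ 2 - algebraMap k F (a⁻¹) * v ^ 2)
      - algebraMap k F (d / c) := by
    have h4F : (4 : F) ≠ 0 := by
      intro hh
      have h22 : (2 : F) * 2 = 4 := by norm_num
      rcases mul_eq_zero.1 (h22.trans hh) with h' | h' <;> exact h2F h'
    rw [map_inv₀, map_mul, map_inv₀, map_div₀, key4, map_ofNat]
    rw [hg_def]
    rw [← hcF_def, ← hdF_def]
    field_simp
    ring
  have hxE : x ∈ E := by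
    rw [hxid]
    exact sub_mem (mul_mem (E.algebraMap_mem _)
      (sub_mem (pow_mem huE 2) (mul_mem (E.algebraMap_mem _) (pow_mem hvE 2))))
      (E.algebraMap_mem _)
  have hgE : g ∈ E := by
    rw [hg_def]
    exact add_mem (mul_mem (E.algebraMap_mem c) hxE) (E.algebraMap_mem d)
  -- y is quadratic over E
  have heval : Polynomial.aeval y (Polynomial.X ^ 2
      + Polynomial.C (-(⟨u, huE⟩ : E)) * Polynomial.X + Polynomial.C (⟨g, hgE⟩ : E)) = 0 := by
    have : (algebraMap E F) (-(⟨u, huE⟩ : E)) = -u := rfl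
    simp only [map_add, map_mul, map_pow, Polynomial.aeval_X, Polynomial.aeval_C, this]
    show y ^ 2 + (-u) * y + g = 0
    rw [hu_def]
    field_simp
    ring
  have hmonic : (Polynomial.X ^ 2 + Polynomial.C (-(⟨u, huE⟩ : E)) * Polynomial.X
      + Polynomial.C (⟨g, hgE⟩ : E)).Monic := by
    have hdlt : (Polynomial.C (-(⟨u, huE⟩ : E)) * Polynomial.X
        + Polynomial.C (⟨g, hgE⟩ : E)).degree < ((2 : ℕ) : WithBot ℕ) :=
      lt_of_le_of_lt Polynomial.degree_linear_le (by exact_mod_cast one_lt_two)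
    have := Polynomial.monic_X_pow_add hdlt
    rwa [← add_assoc] at this
  have hyint : IsIntegral E y := ⟨_, hmonic, heval⟩
  -- F = E(y)
  have hg_y2 : y ^ 2 ≠ g := by
    intro hh
    apply htg'
    have hmem : g ∈ Algebra.adjoin K (Set.range ![y]) := by rw [← hh]; exact pow_mem hyA 2
    exact isAlgebraic_algebraMap (⟨g, hmem⟩ : Algebra.adjoin K (Set.range ![y]))
  have hyg : y ^ 2 - g ≠ 0 := sub_ne_zero.2 hg_y2
  set T : IntermediateField E F := IntermediateField.adjoin E {y} with hT_def
  have hET : ∀ w : F, w ∈ E → w ∈ T := by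
    intro w hw
    exact T.algebraMap_mem (⟨w, hw⟩ : E)
  have hyT : y ∈ T := IntermediateField.subset_adjoin _ _ rfl
  have hT : T = ⊤ := by
    rw [eq_top_iff]
    rintro z -
    have hz : z ∈ IntermediateField.adjoin K {x, y} := by rw [hadj]; trivial
    induction hz using IntermediateField.adjoin_induction with
    | mem w hw =>
        rcases hw with hw | hw
        · rw [hw]; exact hET x hxE
        · rw [Set.mem_singleton_iff] at hw; rw [hw]; exact hyT
    | algebraMap κ =>
        have hκ : κ ∈ IntermediateField.adjoin k {sqa} := by rw [hKgen]; trivial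
        induction hκ using IntermediateField.adjoin_induction with
        | mem w hw =>
            rw [Set.mem_singleton_iff] at hw
            rw [hw]
            show s ∈ T
            have hden : u * y - (g + g) = y ^ 2 - g := by
              rw [hu_def]
              field_simp
              ring
            have hgyy : g / y * y = g := div_mul_cancel₀ g hy0
            have hsid : s = (v * y) / (u * y - (g + g)) := by
              rw [eq_div_iff (by rw [hden]; exact hyg), hden, hv_def]
              linear_combination s * hgyy
            rw [hsid]
            exact div_mem (mul_mem (hET v hvE) hyT)
              (sub_mem (mul_mem (hET u huE) hyT) (add_mem (hET g hgE) (hET g hgE)))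
        | algebraMap r =>
            rw [← IsScalarTower.algebraMap_apply]
            exact hET _ (E.algebraMap_mem r)
        | add w₁ w₂ _ _ ih₁ ih₂ => rw [map_add]; exact add_mem ih₁ ih₂
        | inv w _ ih => rw [map_inv₀]; exact inv_mem ih
        | mul w₁ w₂ _ _ ih₁ ih₂ => rw [map_mul]; exact mul_mem ih₁ ih₂
    | add w₁ w₂ _ _ ih₁ ih₂ => exact add_mem ih₁ ih₂
    | inv w _ ih => exact inv_mem ih
    | mul w₁ w₂ _ _ ih₁ ih₂ => exact mul_mem ih₁ ih₂
  -- finite dimensionality and degree bound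
  haveI hFD1 : FiniteDimensional E T := IntermediateField.adjoin.finiteDimensional hyint
  haveI hFD : FiniteDimensional E F := by
    rw [hT] at hFD1
    exact (IntermediateField.topEquiv (F := E) (E := F)).toLinearEquiv.finiteDimensional
  have hfr2 : Module.finrank E F ≤ 2 := by
    have e1 : Module.finrank E F = Module.finrank E T := by
      rw [hT, IntermediateField.finrank_top']
    rw [e1, hT_def, IntermediateField.adjoin.finrank hyint]
    have hdvd := minpoly.dvd E y heval
    have hne : (Polynomial.X ^ 2 + Polynomial.C (-(⟨u, huE⟩ : E)) * Polynomial.X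
        + Polynomial.C (⟨g, hgE⟩ : E)) ≠ 0 := hmonic.ne_zero
    have hdeg : (Polynomial.X ^ 2 + Polynomial.C (-(⟨u, huE⟩ : E)) * Polynomial.X
        + Polynomial.C (⟨g, hgE⟩ : E)).natDegree = 2 := by
      have : (Polynomial.X ^ 2 + Polynomial.C (-(⟨u, huE⟩ : E)) * Polynomial.X
          + Polynomial.C (⟨g, hgE⟩ : E))
          = Polynomial.C 1 * Polynomial.X ^ 2 + Polynomial.C (-(⟨u, huE⟩ : E)) * Polynomial.X
          + Polynomial.C (⟨g, hgE⟩ : E) := by rw [Polynomial.C_1, one_mul]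
      rw [this]
      exact Polynomial.natDegree_quadratic one_ne_zero
    calc (minpoly E y).natDegree ≤ _ := Polynomial.natDegree_le_of_dvd hdvd hne
      _ = 2 := hdeg
  -- σ fixes u and v
  have hσc : σ cF = cF := σ.commutes c
  have hσd : σ dF = dF := σ.commutes d
  have hσg : σ g = g := by rw [hg_def, map_add, map_mul, hσc, hσd, hx]
  have hσgy : σ (g / y) = y := by
    rw [map_div₀, hσg, hy, div_div_eq_mul_div, mul_comm, mul_div_assoc, div_self hg0, mul_one]
  have hσu : σ u = u := by
    rw [hu_def, map_add, hσgy, hy]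
    ring
  have hσv : σ v = v := by
    rw [hv_def, map_mul, map_sub, hσK, hσgy, hy]
    ring
  -- σ has order 2
  have hσ1 : σ ≠ 1 := by
    intro hh
    rw [hh] at hσK
    simp only [AlgEquiv.one_apply] at hσK
    have : (2 : F) * s = 0 := by rw [hs_def]; linear_combination hσK
    rcases mul_eq_zero.1 this with h' | h'
    · exact h2F h'
    · exact hs0 h'
  have hσ2 : σ ^ 2 = 1 := by
    ext z
    rw [pow_two, AlgEquiv.mul_apply, AlgEquiv.one_apply]
    have hz : z ∈ IntermediateField.adjoin K {x, y} := by rw [hadj]; trivial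
    induction hz using IntermediateField.adjoin_induction with
    | mem w hw =>
        rcases hw with hw | hw
        · rw [hw, hx, hx]
        · rw [Set.mem_singleton_iff] at hw
          rw [hw, hy, map_div₀, hσg, hy, div_div_eq_mul_div, mul_comm, mul_div_assoc,
            div_self hg0, mul_one]
    | algebraMap κ =>
        have hκ : κ ∈ IntermediateField.adjoin k {sqa} := by rw [hKgen]; trivial
        induction hκ using IntermediateField.adjoin_induction with
        | mem w hw =>
            rw [Set.mem_singleton_iff] at hw
            rw [hw]
            show σ (σ s) = s
            rw [hs_def] at hσK ⊢
            rw [hσK, map_neg, hσK, neg_neg]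
        | algebraMap r =>
            rw [← IsScalarTower.algebraMap_apply, σ.commutes, σ.commutes]
        | add w₁ w₂ _ _ ih₁ ih₂ => rw [map_add, map_add, map_add, ih₁, ih₂]
        | inv w _ ih => rw [map_inv₀, map_inv₀, map_inv₀, ih]
        | mul w₁ w₂ _ _ ih₁ ih₂ => rw [map_mul, map_mul, map_mul, ih₁, ih₂]
    | add w₁ w₂ _ _ ih₁ ih₂ => rw [map_add, map_add, ih₁, ih₂]
    | inv w _ ih => rw [map_inv₀, map_inv₀, ih]
    | mul w₁ w₂ _ _ ih₁ ih₂ => rw [map_mul, map_mul, ih₁, ih₂]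
  have horder : orderOf σ = 2 := orderOf_eq_prime hσ2 hσ1
  have hfin : IsOfFinOrder σ := isOfFinOrder_iff_pow_eq_one.2 ⟨2, two_pos, hσ2⟩
  haveI : Finite (Subgroup.zpowers σ) := hfin.finite_zpowers
  haveI : Fintype (Subgroup.zpowers σ) := Fintype.ofFinite _
  have hcard : Fintype.card (Subgroup.zpowers σ) = 2 := by
    rw [← Nat.card_eq_fintype_card, Nat.card_zpowers, horder]
  have hrank : Module.finrank (IntermediateField.fixedField (Subgroup.zpowers σ)) F = 2 :=
    (FixedPoints.finrank_eq_card (Subgroup.zpowers σ) F).trans hcard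
  -- E is the fixed field
  have hEle : E ≤ IntermediateField.fixedField (Subgroup.zpowers σ) := by
    rw [hE_def, IntermediateField.adjoin_le_iff]
    intro w hw
    rcases hw with hw | hw
    · rw [hw]; exact my_mem_fixed σ hσu
    · rw [Set.mem_singleton_iff] at hw; rw [hw]; exact my_mem_fixed σ hσv
  have hEeq : E = IntermediateField.fixedField (Subgroup.zpowers σ) := by
    refine IntermediateField.eq_of_le_of_finrank_le' hEle ?_
    rw [hrank]
    exact hfr2
  refine ⟨![u, v], ?_, huv, ?_⟩
  · intro i
    fin_cases i
    · exact my_mem_fixed σ hσu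
    · exact my_mem_fixed σ hσv
  · have hr : Set.range ![u, v] = {u, v} := by
      ext w
      constructor
      · rintro ⟨i, rfl⟩
        fin_cases i
        · exact Set.mem_insert _ _
        · exact Set.mem_insert_of_mem _ rfl
      · rintro (rfl | rfl)
        · exact ⟨0, rfl⟩
        · exact ⟨1, rfl⟩
    rw [← hEeq, hE_def, hr]
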